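/- (Theorem 3.2 (i), Jacobian of the power function) Under the Haar-type hypotheses, let γ ∈ ℝ with γ ≥ 1 and let û ∈ H⁺ (so all diagonal entries of D(û) are strictly positive). Then the map p̂(α) := H · D(α)^γ · Hᵀ e₀ (entrywise real power of the diagonal of D(α)), defined on the open set H⁺, is Fréchet differentiable at û and its derivative is the linear map represented by the matrix γ • H · D(û)^{γ−1} · Hᵀ. -/

import Mathlib

open Matrix

/-- Theorem 3.2 (i), Jacobian of the power function: under the Haar-type hypotheses,
for `γ ≥ 1` and `uh ∈ H⁺` (so the diagonal of `D(uh) := Hᵀ P(uh) H` is strictly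
positive), the map `α ↦ H · D(α)^γ · Hᵀ e₀` (entrywise real power of the diagonal)
is Fréchet differentiable at `uh` with derivative represented by the matrix
`γ • H · D(uh)^{γ−1} · Hᵀ`. -/
theorem haar_sg_power_jacobian {n : ℕ} [NeZero n]
    (M : Fin n → Matrix (Fin n) (Fin n) ℝ)
    (hMsymm : ∀ k, (M k).IsSymm) (hM0 : M 0 = 1)
    (P : (Fin n → ℝ) → Matrix (Fin n) (Fin n) ℝ)
    (hP : ∀ uh, P uh = ∑ k, uh k • M k)
    (hsym : ∀ uh wh : Fin n → ℝ, (P uh).mulVec wh = (P wh).mulVec uh)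
    (e0 : Fin n → ℝ) (he0 : e0 = Pi.single 0 1)
    (H : Matrix (Fin n) (Fin n) ℝ) (hH : Hᵀ * H = 1)
    (hdiag : ∀ k, (Hᵀ * M k * H).IsDiag)
    (γ : ℝ) (hγ : 1 ≤ γ)
    (uh : Fin n → ℝ) (huh : (P uh).PosDef) :
    HasFDerivAt
      (fun α : Fin n → ℝ =>
        (H * Matrix.diagonal (fun i => ((Hᵀ * P α * H) i i) ^ γ) * Hᵀ).mulVec e0)
      (LinearMap.toContinuousLinearMap
        (Matrix.mulVecLin
          (γ • (H * Matrix.diagonal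
            (fun i => ((Hᵀ * P uh * H) i i) ^ (γ - 1)) * Hᵀ))))
      uh := by
  -- entries of Hᵀ P α H are linear in α
  have keyE : ∀ (α : Fin n → ℝ) (i j : Fin n),
      (Hᵀ * P α * H) i j = ∑ k, α k * ((Hᵀ * M k * H) i j) := by
    intro α i j
    rw [hP]
    simp [Matrix.mul_sum, Matrix.sum_mul, Matrix.mul_smul, Matrix.smul_mul,
      Matrix.sum_apply, Matrix.smul_apply, smul_eq_mul, Matrix.mul_assoc]
  have hPe0 : P e0 = 1 := by
    rw [hP, he0]
    rw [Finset.sum_eq_single 0]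
    · simp [hM0]
    · intro k _ hk; simp [Pi.single_apply, hk]
    · simp
  have hw0 : ∀ w : Fin n → ℝ, (P w).mulVec e0 = w := fun w => by
    rw [← hsym, hPe0, Matrix.one_mulVec]
  have hHHt : H * Hᵀ = 1 := mul_eq_one_comm.mp hH
  have hdiagP : ∀ w : Fin n → ℝ, (Hᵀ * P w * H).IsDiag := by
    intro w i j hij
    rw [keyE]
    exact Finset.sum_eq_zero fun k _ => by rw [hdiag k hij, mul_zero]
  have hHte0 : ∀ i, (Hᵀ).mulVec e0 i = H 0 i := by
    intro i; rw [he0]; simp [Matrix.mulVec_single, Matrix.transpose_apply]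
  -- key identity: Hᵀ w = D(w) Hᵀ e0
  have hw : ∀ (w : Fin n → ℝ) (i : Fin n),
      (Hᵀ).mulVec w i = ((Hᵀ * P w * H) i i) * H 0 i := by
    intro w i
    have h1 : (Hᵀ).mulVec w = (Hᵀ * P w * H).mulVec ((Hᵀ).mulVec e0) := by
      rw [Matrix.mulVec_mulVec, Matrix.mul_assoc (Hᵀ * P w), hHHt, Matrix.mul_one,
        ← Matrix.mulVec_mulVec, hw0]
    conv_lhs => rw [h1, ← (hdiagP w).diagonal_diag]
    rw [Matrix.mulVec_diagonal, hHte0 i]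
    rfl
  -- the coordinate linear functionals
  let L : Fin n → ((Fin n → ℝ) →ₗ[ℝ] ℝ) := fun i =>
    { toFun := fun w : Fin n → ℝ => (Hᵀ * P w * H) i i,
      map_add' := by intro a b; simp [keyE, add_mul, Finset.sum_add_distrib],
      map_smul' := by
        intro c a
        simp only [keyE, smul_eq_mul, RingHom.id_apply, Pi.smul_apply, Finset.mul_sum,
          mul_assoc] }
  have Lhd : ∀ i : Fin n, HasFDerivAt (fun α : Fin n → ℝ => (Hᵀ * P α * H) i i)
      (LinearMap.toContinuousLinearMap (L i)) uh :=
    fun i => (LinearMap.toContinuousLinearMap (L i)).hasFDerivAt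
  rw [hasFDerivAt_pi']
  intro j
  -- rewrite the function in coordinate form
  have feq : (fun α : Fin n → ℝ =>
      (H * Matrix.diagonal (fun i => ((Hᵀ * P α * H) i i) ^ γ) * Hᵀ).mulVec e0 j)
      = fun α => ∑ i, (H j i * H 0 i) * ((Hᵀ * P α * H) i i) ^ γ := by
    funext α
    rw [he0, Matrix.mulVec_single, Pi.smul_apply, Matrix.col_apply, op_smul_eq_mul]
    simp only [Matrix.mul_apply, Matrix.diagonal_apply, Matrix.transpose_apply]
    rw [Finset.sum_mul]
    refine Finset.sum_congr rfl fun i _ => ?_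
    rw [Finset.sum_eq_single i]
    · simp only [if_true, mul_one]; ring
    · intro k _ hk; simp [hk]
    · simp
  rw [feq]
  have hterm : ∀ i : Fin n, HasFDerivAt
      (fun α : Fin n → ℝ => (H j i * H 0 i) * ((Hᵀ * P α * H) i i) ^ γ)
      ((H j i * H 0 i) • ((γ * ((Hᵀ * P uh * H) i i) ^ (γ - 1)) •
        (LinearMap.toContinuousLinearMap (L i)))) uh := by
    intro i
    exact ((Real.hasDerivAt_rpow_const (Or.inr hγ)).comp_hasFDerivAt uh (Lhd i)).const_mul _
  refine (HasFDerivAt.fun_sum (fun i _ => hterm i)).congr_fderiv ?_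
  ext w
  simp only [ContinuousLinearMap.coe_sum', Finset.sum_apply, ContinuousLinearMap.smul_apply,
    ContinuousLinearMap.comp_apply, ContinuousLinearMap.proj_apply,
    LinearMap.coe_toContinuousLinearMap', Matrix.mulVecLin_apply, smul_eq_mul]
  have hL : ∀ i, (L i) w = (Hᵀ * P w * H) i i := fun i => rfl
  have hrhs : (γ • (H * Matrix.diagonal (fun i => ((Hᵀ * P uh * H) i i) ^ (γ - 1)) * Hᵀ)).mulVec w j
      = ∑ i, γ * (H j i * (((Hᵀ * P uh * H) i i) ^ (γ - 1) * ((Hᵀ).mulVec w i))) := by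
    rw [Matrix.smul_mulVec, Matrix.mul_assoc, ← Matrix.mulVec_mulVec,
      ← Matrix.mulVec_mulVec]
    simp only [Pi.smul_apply, smul_eq_mul, Matrix.mulVec, dotProduct]
    rw [Finset.mul_sum]
    refine Finset.sum_congr rfl fun i _ => ?_
    have hS : (∑ x, Matrix.diagonal (fun i => ((Hᵀ * P uh * H) i i) ^ (γ - 1)) i x
        * (∑ y, Hᵀ x y * w y))
        = ((Hᵀ * P uh * H) i i) ^ (γ - 1) * (∑ y, Hᵀ i y * w y) := by
      rw [Finset.sum_eq_single i]
      · rw [Matrix.diagonal_apply_eq]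
      · intro b _ hb; rw [Matrix.diagonal_apply_ne _ (Ne.symm hb), zero_mul]
      · simp
    rw [hS]
  rw [hrhs]
  refine Finset.sum_congr rfl fun i _ => ?_
  rw [hL, hw w i]
  ring
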